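/- With χ defined as in the preceding construction (χ(t) = log(e/t) on (0,1], and piecewise linear/constant with values ≈ 2^{-k} on (a_k, a_{k+1}] where a_k = (k+3)!), the averaged function satisfies (1/t) ∫_0^t χ(s) ds ≤ 4 χ(t/4^{1/γ}) for all t > 0 and any fixed γ > 0, yet there is no constant C with (1/t) ∫_0^t χ(s) ds ≤ χ(t/C^{1/γ}) for all t, since (1/a_k) ∫_0^{a_k} χ ≥ 2^{-k} = χ(a_k/k) for all k ≥ 1. -/

import Mathlib

open scoped ENNReal NNReal
open MeasureTheory Set

lemma aux_intInt_log : IntervalIntegrable Real.log volume 0 1 := by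
  rw [intervalIntegrable_iff_integrableOn_Ioc_of_le (by norm_num)]
  have hg : IntegrableOn (fun x : ℝ => 2 * x ^ (-(1:ℝ)/2)) (Ioc 0 1) volume := by
    have := (intervalIntegral.intervalIntegrable_rpow'
      (r := -(1:ℝ)/2) (by norm_num) (a := 0) (b := 1)).const_mul 2
    rwa [intervalIntegrable_iff_integrableOn_Ioc_of_le (by norm_num)] at this
  refine hg.integrable.mono Real.measurable_log.aestronglyMeasurable ?_
  filter_upwards [ae_restrict_mem measurableSet_Ioc] with x hx
  obtain ⟨hx0, hx1⟩ := hx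
  have hxr : (0:ℝ) < x ^ (-(1:ℝ)/2) := Real.rpow_pos_of_pos hx0 _
  have hlog : Real.log x ≤ 0 := Real.log_nonpos hx0.le hx1
  have h1 : -Real.log x = 2 * Real.log (x ^ (-(1:ℝ)/2)) := by
    rw [Real.log_rpow hx0]; ring
  have h2 : Real.log (x ^ (-(1:ℝ)/2)) ≤ x ^ (-(1:ℝ)/2) - 1 :=
    Real.log_le_sub_one_of_pos hxr
  have : -Real.log x ≤ 2 * x ^ (-(1:ℝ)/2) := by nlinarith
  rw [Real.norm_eq_abs, Real.norm_eq_abs, abs_of_nonpos hlog,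
    abs_of_nonneg (by positivity)]
  exact this

lemma aux_ii_log {t : ℝ} (ht : 0 < t) (ht1 : t ≤ 1) :
    IntervalIntegrable Real.log volume 0 t :=
  aux_intInt_log.mono_set (by
    rw [uIcc_of_le ht.le, uIcc_of_le (by norm_num : (0:ℝ) ≤ 1)]
    exact Icc_subset_Icc le_rfl ht1)

lemma aux_integral_log {t : ℝ} (ht : 0 < t) (ht1 : t ≤ 1) :
    ∫ s in (0:ℝ)..t, Real.log s = t * Real.log t - t := by
  have := intervalIntegral.integral_eq_sub_of_hasDeriv_right_of_le ht.le
    (f := fun x => x * Real.log x - x) (f' := Real.log)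
    ((Real.continuous_mul_log.sub continuous_id).continuousOn)
    (fun x hx => by
      have h := (Real.hasDerivAt_mul_log (ne_of_gt hx.1)).sub (hasDerivAt_id x)
      exact h.hasDerivWithinAt.congr_deriv (by ring))
    (aux_ii_log ht ht1)
  simpa using this

set_option maxHeartbeats 1000000 in
theorem stmt18 (γ : ℝ) (hγ : 0 < γ)
    (a : ℕ → ℝ) (ha0 : a 0 = 1)
    (hak : ∀ k : ℕ, 1 ≤ k → a k = (Nat.factorial (k + 3) : ℝ))
    (χ : ℝ → ℝ)
    (hχlog : ∀ t : ℝ, 0 < t → t ≤ 1 → χ t = Real.log (Real.exp 1 / t))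
    (hχlin : ∀ (k : ℕ) (t : ℝ), a k < t → t ≤ a k + 1 →
      χ t = ((2:ℝ) ^ k)⁻¹ * (1 - (t - a k) / 2))
    (hχconst : ∀ (k : ℕ) (t : ℝ), a k + 1 < t → t ≤ a (k + 1) →
      χ t = ((2:ℝ) ^ (k + 1))⁻¹) :
    (∀ t > (0:ℝ), (1 / t) * ∫ s in (0:ℝ)..t, χ s ≤ 4 * χ (t / 4 ^ (1 / γ))) ∧
    (∀ k : ℕ, 1 ≤ k →
      ((2:ℝ) ^ k)⁻¹ ≤ (1 / a k) * ∫ s in (0:ℝ)..(a k), χ s ∧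
        χ (a k / k) = ((2:ℝ) ^ k)⁻¹) ∧
    ¬ ∃ C > (1:ℝ), ∀ t > (0:ℝ),
        (1 / t) * ∫ s in (0:ℝ)..t, χ s ≤ χ (t / C ^ (1 / γ)) := by
  -- basic facts about a
  have ha1 : ∀ k, (1:ℝ) ≤ a k := by
    intro k
    rcases Nat.eq_zero_or_pos k with rfl | hk
    · rw [ha0]
    · rw [hak k hk]; exact_mod_cast Nat.one_le_iff_ne_zero.mpr (Nat.factorial_pos _).ne'
  have ha4 : ∀ k, 4 * a k ≤ a (k+1) := by
    intro k
    rcases Nat.eq_zero_or_pos k with rfl | hk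
    · rw [ha0, hak 1 le_rfl]; norm_num [Nat.factorial]
    · have hnat : 4 * Nat.factorial (k+3) ≤ Nat.factorial (k+1+3) := by
        have h1 : k+1+3 = (k+3)+1 := by omega
        rw [h1, Nat.factorial_succ]
        exact Nat.mul_le_mul_right _ (by omega)
      rw [hak k hk, hak (k+1) (by omega)]
      exact_mod_cast hnat
  have ha_pos : ∀ k, (0:ℝ) < a k := fun k => lt_of_lt_of_le one_pos (ha1 k)
  have hastep : ∀ k, a k + 3 ≤ a (k+1) := by
    intro k; have := ha4 k; have := ha1 k; linarith
  have hamono : Monotone a :=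
    monotone_nat_of_le_succ (fun k => by linarith [hastep k])
  have haN : ∀ k : ℕ, (k:ℝ) ≤ a k := by
    intro k
    induction k with
    | zero => simp [ha0]
    | succ n ih => push_cast; linarith [hastep n]
  -- lower bound on χ
  have hL : ∀ (k : ℕ) (t : ℝ), 0 < t → t ≤ a k → ((2:ℝ) ^ k)⁻¹ ≤ χ t := by
    intro k
    induction k with
    | zero =>
      intro t ht0 ht1
      rw [ha0] at ht1
      rw [hχlog t ht0 ht1, Real.log_div (Real.exp_ne_zero 1) ht0.ne', Real.log_exp]
      have := Real.log_nonpos ht0.le ht1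
      simp only [pow_zero, inv_one]
      linarith
    | succ k ih =>
      intro t ht0 htk
      have hp : (0:ℝ) < (2:ℝ)^k := by positivity
      have hinv : ((2:ℝ) ^ (k+1))⁻¹ = ((2:ℝ)^k)⁻¹ * 2⁻¹ := by
        rw [pow_succ, mul_inv]
      rcases le_or_gt t (a k) with h | h
      · refine le_trans ?_ (ih t ht0 h)
        rw [hinv]
        nlinarith [inv_pos.mpr hp]
      · rcases le_or_gt t (a k + 1) with h' | h'
        · rw [hχlin k t h h', hinv]
          have h2 : (2:ℝ)⁻¹ ≤ 1 - (t - a k) / 2 := by linarith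
          exact mul_le_mul_of_nonneg_left h2 (by positivity)
        · rw [hχconst k t h' htk]
  -- upper bound on χ
  have hUm : ∀ (m k : ℕ) (t : ℝ), a k < t → t ≤ a (k + m) → χ t ≤ ((2:ℝ) ^ k)⁻¹ := by
    intro m
    induction m with
    | zero => intro k t h1 h2; exact absurd (h1.trans_le h2) (lt_irrefl _)
    | succ m ih =>
      intro k t h1 h2
      rcases le_or_gt t (a (k + m)) with h | h
      · exact ih k t h1 h
      · have h2' : t ≤ a ((k+m) + 1) := by
          have : k + (m + 1) = (k + m) + 1 := by omega
          rwa [this] at h2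
        have hkm : ((2:ℝ) ^ (k+m))⁻¹ ≤ ((2:ℝ) ^ k)⁻¹ := by
          apply inv_anti₀ (by positivity)
          exact pow_le_pow_right₀ one_le_two (Nat.le_add_right _ _)
        rcases le_or_gt t (a (k+m) + 1) with h' | h'
        · rw [hχlin (k+m) t h h']
          have hp : (0:ℝ) < ((2:ℝ)^(k+m))⁻¹ := by positivity
          have : (1 - (t - a (k+m)) / 2) ≤ 1 := by linarith
          nlinarith
        · rw [hχconst (k+m) t h' h2']
          refine le_trans ?_ hkm
          apply inv_anti₀ (by positivity)
          exact pow_le_pow_right₀ one_le_two (by omega)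
  have hU : ∀ (k : ℕ) (t : ℝ), a k < t → χ t ≤ ((2:ℝ) ^ k)⁻¹ := by
    intro k t h1
    obtain ⟨n, hn⟩ := exists_nat_ge t
    have htn : t ≤ a (k + n) := by
      calc t ≤ (n:ℝ) := hn
      _ ≤ ((k+n : ℕ):ℝ) := by push_cast; linarith [Nat.cast_nonneg (α := ℝ) k]
      _ ≤ a (k+n) := haN _
    exact hUm n k t h1 htn
  -- interval covering
  have hEx : ∀ t : ℝ, 1 < t → ∃ k, a k < t ∧ t ≤ a (k+1) := by
    have key : ∀ (n : ℕ) (t : ℝ), 1 < t → t ≤ a n → ∃ k, a k < t ∧ t ≤ a (k+1) := by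
      intro n
      induction n with
      | zero => intro t ht h0; rw [ha0] at h0; linarith
      | succ n ih =>
        intro t ht h
        rcases le_or_gt t (a n) with h' | h'
        · exact ih t ht h'
        · exact ⟨n, h', h⟩
    intro t ht
    obtain ⟨n, hn⟩ := exists_nat_ge t
    exact key n t ht (hn.trans (haN n))
  -- a (j+1) = (j+4) * a j for j ≥ 1
  have hfact : ∀ j : ℕ, 1 ≤ j → a (j+1) = ((j:ℝ)+4) * a j := by
    intro j hj
    have hnat : Nat.factorial (j+1+3) = (j+4) * Nat.factorial (j+3) := by
      have h1 : j+1+3 = (j+3)+1 := by omega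
      rw [h1, Nat.factorial_succ]
    rw [hak (j+1) (by omega), hak j hj, hnat]
    push_cast
    ring
  -- integrability
  have hInt : ∀ k, IntegrableOn χ (Ioc 0 (a k)) volume := by
    intro k
    induction k with
    | zero =>
      rw [ha0]
      have hbase : IntegrableOn (fun s => 1 - Real.log s) (Ioc (0:ℝ) 1) volume := by
        have h := (intervalIntegrable_const (c := (1:ℝ))).sub aux_intInt_log
        rwa [intervalIntegrable_iff_integrableOn_Ioc_of_le (by norm_num)] at h
      exact hbase.congr_fun (fun x hx => by
        rw [hχlog x hx.1 hx.2, Real.log_div (Real.exp_ne_zero 1) hx.1.ne',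
          Real.log_exp]) measurableSet_Ioc
    | succ k ih =>
      have hb := ha_pos k
      have h1 : a k ≤ a k + 1 := by linarith
      have h2 : a k + 1 ≤ a (k+1) := by linarith [hastep k]
      have hlin : IntegrableOn χ (Ioc (a k) (a k + 1)) volume := by
        have hc : Continuous (fun x : ℝ => ((2:ℝ)^k)⁻¹ * (1 - (x - a k) / 2)) := by
          continuity
        exact (hc.integrableOn_Ioc).congr_fun
          (fun x hx => (hχlin k x hx.1 hx.2).symm) measurableSet_Ioc
      have hcst : IntegrableOn χ (Ioc (a k + 1) (a (k+1))) volume := by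
        refine (integrableOn_const measure_Ioc_lt_top.ne).congr_fun
          (fun x hx => (hχconst k x hx.1 hx.2).symm) measurableSet_Ioc
      have u1 := ih.union hlin
      rw [Ioc_union_Ioc_eq_Ioc hb.le h1] at u1
      have u2 := u1.union hcst
      rwa [Ioc_union_Ioc_eq_Ioc (by linarith) h2] at u2
  have hIntt : ∀ t : ℝ, 0 < t → IntegrableOn χ (Ioc 0 t) volume := by
    intro t ht
    obtain ⟨n, hn⟩ := exists_nat_ge t
    exact (hInt n).mono_set (Ioc_subset_Ioc_right (hn.trans (haN n)))
  -- splitting of integrals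
  have hsplit : ∀ x y z : ℝ, x ≤ y → y ≤ z → IntegrableOn χ (Ioc x z) volume →
      ∫ s in Ioc x z, χ s = (∫ s in Ioc x y, χ s) + ∫ s in Ioc y z, χ s := by
    intro x y z hxy hyz hi
    have h := setIntegral_union (f := χ) (μ := volume) (Ioc_disjoint_Ioc_of_le le_rfl)
      measurableSet_Ioc (hi.mono_set (Ioc_subset_Ioc_right hyz))
      (hi.mono_set (Ioc_subset_Ioc_left hxy))
    rw [Ioc_union_Ioc_eq_Ioc hxy hyz] at h
    exact h
  -- the log part integral
  have hIlogval : ∀ t : ℝ, 0 < t → t ≤ 1 →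
      ∫ s in Ioc (0:ℝ) t, χ s = 2*t - t*Real.log t := by
    intro t ht ht1
    have e1 : ∫ s in Ioc (0:ℝ) t, χ s = ∫ s in Ioc (0:ℝ) t, (1 - Real.log s) :=
      setIntegral_congr_fun measurableSet_Ioc (fun x hx => by
        rw [hχlog x hx.1 (hx.2.trans ht1),
          Real.log_div (Real.exp_ne_zero 1) hx.1.ne', Real.log_exp])
    rw [e1, ← intervalIntegral.integral_of_le ht.le,
      intervalIntegral.integral_sub intervalIntegrable_const (aux_ii_log ht ht1),
      aux_integral_log ht ht1, intervalIntegral.integral_const]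
    simp only [smul_eq_mul, sub_zero, mul_one]
    ring
  -- constant integral helper
  have hconstint : ∀ (x y q : ℝ), x ≤ y →
      ∫ _ in Ioc x y, q = (y - x) * q := by
    intro x y q hxy
    rw [setIntegral_const, Real.volume_real_Ioc_of_le hxy,
      smul_eq_mul]
  -- upper bound on integrals
  have hupper : ∀ k, (∫ s in Ioc (0:ℝ) (a k), χ s) ≤ 2 * ((2:ℝ)^k)⁻¹ * a k := by
    intro k
    induction k with
    | zero =>
      rw [ha0, hIlogval 1 one_pos le_rfl]
      simp [Real.log_one]
    | succ k ih =>
      have hb := ha_pos k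
      have h1 : a k ≤ a k + 1 := by linarith
      have h2 : a k + 1 ≤ a (k+1) := by linarith [hastep k]
      have hp : (0:ℝ) < ((2:ℝ)^k)⁻¹ := by positivity
      have hi := hInt (k+1)
      rw [hsplit 0 (a k) (a (k+1)) hb.le (by linarith) hi,
        hsplit (a k) (a k + 1) (a (k+1)) h1 h2
          (hi.mono_set (Ioc_subset_Ioc_left hb.le))]
      have hmid : ∫ s in Ioc (a k) (a k + 1), χ s ≤ ((2:ℝ)^k)⁻¹ := by
        have hmono := setIntegral_mono_on
          ((hi.mono_set (Ioc_subset_Ioc_left hb.le)).mono_set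
            (Ioc_subset_Ioc_right h2))
          (integrableOn_const measure_Ioc_lt_top.ne)
          measurableSet_Ioc
          (fun x hx => hU k x hx.1)
        rw [hconstint _ _ _ h1] at hmono
        calc ∫ s in Ioc (a k) (a k + 1), χ s
            ≤ (a k + 1 - a k) * ((2:ℝ)^k)⁻¹ := hmono
          _ = ((2:ℝ)^k)⁻¹ := by ring_nf
      have hlast : ∫ s in Ioc (a k + 1) (a (k+1)), χ s
          = (a (k+1) - (a k + 1)) * ((2:ℝ)^(k+1))⁻¹ := by
        rw [setIntegral_congr_fun measurableSet_Ioc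
          (fun x hx => hχconst k x hx.1 hx.2), hconstint _ _ _ h2]
      rw [hlast]
      have hq : ((2:ℝ)^(k+1))⁻¹ = ((2:ℝ)^k)⁻¹ / 2 := by
        rw [pow_succ, mul_inv]; ring
      rw [hq]
      have h4 := ha4 k
      have ha1k := ha1 k
      linarith [ih, hmid, mul_le_mul_of_nonneg_left h4 hp.le,
        mul_le_mul_of_nonneg_left ha1k hp.le]
  -- lower bound on integrals
  have hlow : ∀ k : ℕ, 1 ≤ k →
      ((2:ℝ)^k)⁻¹ * a k + 1 ≤ ∫ s in Ioc (0:ℝ) (a k), χ s := by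
    intro k hk
    have hp : (0:ℝ) < ((2:ℝ)^k)⁻¹ := by positivity
    have hp2 : ((2:ℝ)^k)⁻¹ ≤ 1 := by
      have h1 : (1:ℝ) ≤ 2^k := one_le_pow₀ one_le_two
      have h2 : (0:ℝ) < 2^k := by positivity
      rw [inv_le_one_iff₀]
      tauto
    have h1k : (1:ℝ) ≤ a k := ha1 k
    rw [hsplit 0 1 (a k) zero_le_one h1k (hIntt _ (ha_pos k)), hIlogval 1 one_pos le_rfl]
    have htail : ((2:ℝ)^k)⁻¹ * (a k - 1) ≤ ∫ s in Ioc (1:ℝ) (a k), χ s := by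
      have hmono := setIntegral_mono_on
        (integrableOn_const measure_Ioc_lt_top.ne)
        ((hIntt _ (ha_pos k)).mono_set (Ioc_subset_Ioc_left zero_le_one))
        measurableSet_Ioc
        (fun x hx => hL k x (lt_trans one_pos hx.1) hx.2)
      rw [hconstint _ _ _ h1k] at hmono
      calc ((2:ℝ)^k)⁻¹ * (a k - 1) = (a k - 1) * ((2:ℝ)^k)⁻¹ := by ring
        _ ≤ _ := hmono
    norm_num [Real.log_one]
    linarith [htail, hp2]
  -- generic part-1 argument for an arbitrary constant c ≥ 1
  have hPart1 : ∀ c : ℝ, 1 ≤ c → ∀ t : ℝ, 0 < t →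
      (1 / t) * (∫ s in (0:ℝ)..t, χ s) ≤ 4 * χ (t / c) := by
    intro c hc1 t ht
    have hcpos : (0:ℝ) < c := lt_of_lt_of_le one_pos hc1
    have htc0 : 0 < t / c := div_pos ht hcpos
    have htct : t / c ≤ t := div_le_self ht.le hc1
    rcases le_or_gt t 1 with ht1 | ht1
    · -- log regime
      have htc1 : t / c ≤ 1 := htct.trans ht1
      have hχv : χ (t/c) = 1 - Real.log t + Real.log c := by
        rw [hχlog _ htc0 htc1, Real.log_div (Real.exp_ne_zero 1) htc0.ne',
          Real.log_exp, Real.log_div ht.ne' hcpos.ne']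
        ring
      rw [intervalIntegral.integral_of_le ht.le, hIlogval t ht ht1, hχv]
      have hlogt : Real.log t ≤ 0 := Real.log_nonpos ht.le ht1
      have hlogc : 0 ≤ Real.log c := Real.log_nonneg hc1
      have he : (1/t) * (2*t - t*Real.log t) = 2 - Real.log t := by
        field_simp
      rw [he]
      linarith
    · -- piecewise regime
      obtain ⟨k, hk1, hk2⟩ := hEx t ht1
      have hp : (0:ℝ) < ((2:ℝ)^k)⁻¹ := by positivity
      have hi := hIntt t ht
      rw [intervalIntegral.integral_of_le ht.le,
        hsplit 0 (a k) t (ha_pos k).le hk1.le hi]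
      have hI2 : ∫ s in Ioc (a k) t, χ s ≤ (t - a k) * ((2:ℝ)^k)⁻¹ := by
        have hmono := setIntegral_mono_on
          (hi.mono_set (Ioc_subset_Ioc_left (ha_pos k).le))
          (integrableOn_const measure_Ioc_lt_top.ne)
          measurableSet_Ioc
          (fun x hx => hU k x hx.1)
        rwa [hconstint _ _ _ hk1.le] at hmono
      have hS : (∫ s in Ioc (0:ℝ) (a k), χ s) + ∫ s in Ioc (a k) t, χ s
          ≤ 2 * ((2:ℝ)^k)⁻¹ * t := by
        have := hupper k
        nlinarith [hk1.le]
      have hLHS : (1/t) * ((∫ s in Ioc (0:ℝ) (a k), χ s) + ∫ s in Ioc (a k) t, χ s)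
          ≤ 2 * ((2:ℝ)^k)⁻¹ := by
        have h1t : (0:ℝ) < 1/t := by positivity
        have := mul_le_mul_of_nonneg_left hS h1t.le
        have he : (1/t) * (2 * ((2:ℝ)^k)⁻¹ * t) = 2 * ((2:ℝ)^k)⁻¹ := by
          field_simp
        linarith [he ▸ this]
      have hRHS : 2 * ((2:ℝ)^k)⁻¹ ≤ 4 * χ (t / c) := by
        have hLtc : ((2:ℝ)^(k+1))⁻¹ ≤ χ (t / c) :=
          hL (k+1) (t/c) htc0 (htct.trans hk2)
        have hq : ((2:ℝ)^(k+1))⁻¹ = ((2:ℝ)^k)⁻¹ / 2 := by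
          rw [pow_succ, mul_inv]; ring
        rw [hq] at hLtc
        linarith
      linarith
  refine ⟨?_, ?_, ?_⟩
  · -- part 1
    intro t ht
    have hc1 : (1:ℝ) ≤ (4:ℝ) ^ (1/γ) := by
      calc (1:ℝ) = (4:ℝ) ^ (0:ℝ) := (Real.rpow_zero 4).symm
        _ ≤ _ := Real.rpow_le_rpow_of_exponent_le (by norm_num)
            (div_nonneg zero_le_one hγ.le)
    exact hPart1 _ hc1 t ht
  · -- part 2
    intro k hk
    have hkR : (1:ℝ) ≤ (k:ℝ) := by exact_mod_cast hk
    have hp : (0:ℝ) < ((2:ℝ)^k)⁻¹ := by positivity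
    constructor
    · have hIlow := hlow k hk
      rw [intervalIntegral.integral_of_le (ha_pos k).le, one_div,
        ← div_eq_inv_mul, le_div_iff₀ (ha_pos k)]
      have h1a : (0:ℝ) < 1 / a k := one_div_pos.mpr (ha_pos k)
      linarith
    · obtain ⟨j, rfl⟩ : ∃ j, k = j + 1 := ⟨k - 1, by omega⟩
      apply hχconst j
      · -- a j + 1 < a (j+1) / (j+1)
        rcases Nat.eq_zero_or_pos j with rfl | hj
        · rw [ha0, hak 1 le_rfl]
          norm_num [Nat.factorial]
        · have hfj := hfact j hj
          have haj := ha_pos j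
          have h1j : (1:ℝ) ≤ a j := ha1 j
          have hjR : (1:ℝ) ≤ (j:ℝ) := by exact_mod_cast hj
          rw [lt_div_iff₀ (by exact_mod_cast Nat.succ_pos j : (0:ℝ) < ((j+1 : ℕ) : ℝ))]
          push_cast
          rw [hfj]
          nlinarith [haN j]
      · exact div_le_self (ha_pos _).le
          (by exact_mod_cast Nat.succ_le_succ (Nat.zero_le j))
  · -- part 3
    rintro ⟨C, hC, hall⟩
    set c := C ^ (1/γ) with hcdef
    have hc1 : (1:ℝ) ≤ c := by
      calc (1:ℝ) = C ^ (0:ℝ) := (Real.rpow_zero C).symm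
        _ ≤ _ := Real.rpow_le_rpow_of_exponent_le (le_of_lt hC)
            (div_nonneg zero_le_one hγ.le)
    have hcpos : (0:ℝ) < c := lt_of_lt_of_le one_pos hc1
    obtain ⟨n, hn⟩ := exists_nat_ge (2*c)
    set j := max n 1 with hjdef
    have hj1 : 1 ≤ j := le_max_right n 1
    have hjc : 2*c ≤ (j:ℝ) := hn.trans (by exact_mod_cast le_max_left n 1)
    set k := j + 1 with hkdef
    have hpk : (0:ℝ) < ((2:ℝ)^k)⁻¹ := by positivity
    have haj := ha_pos j
    have h1j : (1:ℝ) ≤ a j := ha1 j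
    have hfj := hfact j hj1
    have hχval : χ (a k / c) = ((2:ℝ)^k)⁻¹ := by
      apply hχconst j
      · rw [lt_div_iff₀ hcpos, hfj]
        nlinarith [mul_le_mul_of_nonneg_right hjc haj.le,
          mul_le_mul_of_nonneg_left h1j hcpos.le]
      · exact div_le_self (ha_pos k).le hc1
    have hIlow := hlow k (by omega)
    have hcall := hall (a k) (ha_pos k)
    rw [hχval, intervalIntegral.integral_of_le (ha_pos k).le, one_div,
      ← div_eq_inv_mul, div_le_iff₀ (ha_pos k)] at hcall
    linarith
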